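/- Let ε > 0 and let η : ℤ² → ℝ satisfy (H₀): inf_n η(n) > −1 and η(n) → 0 as |n| → ∞, together with (H₁): sup_{n∈ℤ²} Λ(n)^ε ⟨n₁⟩ |η(n₁,n₂) − η(n₁+1,n₂)| < ∞, (H₂): sup_n Λ(n)^ε ⟨n₂⟩ |η(n₁,n₂) − η(n₁,n₂+1)| < ∞, (H₃): sup_n Λ(n)^ε ⟨n₁−n₂⟩ |η(n₁,n₂) − η(n₁+1,n₂−1)| < ∞, and (H₄): sup_n Λ(n)^ε |η(n)| < ∞; set m := 1 + η and D := Δ_T − Δ̃. Then there exists c > 0 such that for every finitely supported f : ℤ² → ℂ, Σ_{n∈ℤ²} Λ(n)^{2ε} |(D(A f))(n) − (A(D f))(n)|² ≤ c · Σ_{n∈ℤ²} |f(n)|²; i.e., Λ^{ε}(Q)[Δ_T − Δ̃, A] extends to a bounded operator on ℓ²(ℤ²,ℂ). -/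

import Mathlib

open scoped ENNReal
open Filter

noncomputable section

/-- The Hilbert space `ℓ²(ℤ², ℂ)`. -/
abbrev H2 : Type := lp (fun _ : ℤ × ℤ => ℂ) 2

/-- The triangular-lattice Laplacian, acting pointwise on functions `ℤ² → ℂ`. -/
def lapT (f : ℤ × ℤ → ℂ) : ℤ × ℤ → ℂ := fun n =>
  (1/6 : ℂ) * (f (n.1 + 1, n.2) + f (n.1 - 1, n.2) + f (n.1, n.2 + 1)
    + f (n.1, n.2 - 1) + f (n.1 + 1, n.2 - 1) + f (n.1 - 1, n.2 + 1))

/-- The symbol `F(x₁,x₂) = (1/3)(cos x₁ + cos x₂ + cos (x₁ - x₂))`. -/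
def symbF (x : ℝ × ℝ) : ℝ := (1/3) * (Real.cos x.1 + Real.cos x.2 + Real.cos (x.1 - x.2))

/-- `∂₁ F`. -/
def d1F (x : ℝ × ℝ) : ℝ := -(1/3) * (Real.sin x.1 + Real.sin (x.1 - x.2))

/-- `∂₂ F`. -/
def d2F (x : ℝ × ℝ) : ℝ := -(1/3) * (Real.sin x.2 - Real.sin (x.1 - x.2))

/-- Japanese bracket `⟨t⟩ = √(1/2 + t²)`. -/
def jap (t : ℝ) : ℝ := Real.sqrt (1/2 + t^2)

/-- The weight `Λ(n₁,n₂) = ⟨n₁⟩ + ⟨n₂⟩`. -/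
def Lam (n : ℤ × ℤ) : ℝ := jap (n.1 : ℝ) + jap (n.2 : ℝ)

/-- The conjugate operator `A`, acting pointwise on functions `ℤ² → ℂ`. -/
def opA (f : ℤ × ℤ → ℂ) : ℤ × ℤ → ℂ := fun n =>
  (Complex.I / 6) *
    (((n.1 : ℂ) + 1/2) * f (n.1 + 1, n.2) - ((n.1 : ℂ) - 1/2) * f (n.1 - 1, n.2)
      + ((n.2 : ℂ) + 1/2) * f (n.1, n.2 + 1) - ((n.2 : ℂ) - 1/2) * f (n.1, n.2 - 1)
      + ((n.2 : ℂ) - (n.1 : ℂ) + 1) * f (n.1 - 1, n.2 + 1)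
      + ((n.1 : ℂ) - (n.2 : ℂ) + 1) * f (n.1 + 1, n.2 - 1))

/-- The perturbed Laplacian `Δ̃` with weight `m`, acting pointwise on functions `ℤ² → ℂ`:
`(Δ̃ f)(n) = (1/6) Σ_{l ∼ n} f(l) / (√(m n) √(m l))`. -/
def lapPert (m : ℤ × ℤ → ℝ) (f : ℤ × ℤ → ℂ) : ℤ × ℤ → ℂ := fun n =>
  (1/6 : ℂ) *
    (f (n.1 + 1, n.2) / ((Real.sqrt (m n) * Real.sqrt (m (n.1 + 1, n.2)) : ℝ) : ℂ)
      + f (n.1 - 1, n.2) / ((Real.sqrt (m n) * Real.sqrt (m (n.1 - 1, n.2)) : ℝ) : ℂ)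
      + f (n.1, n.2 + 1) / ((Real.sqrt (m n) * Real.sqrt (m (n.1, n.2 + 1)) : ℝ) : ℂ)
      + f (n.1, n.2 - 1) / ((Real.sqrt (m n) * Real.sqrt (m (n.1, n.2 - 1)) : ℝ) : ℂ)
      + f (n.1 + 1, n.2 - 1) / ((Real.sqrt (m n) * Real.sqrt (m (n.1 + 1, n.2 - 1)) : ℝ) : ℂ)
      + f (n.1 - 1, n.2 + 1) / ((Real.sqrt (m n) * Real.sqrt (m (n.1 - 1, n.2 + 1)) : ℝ) : ℂ))

open Finset

lemma jap_pos (t : ℝ) : 0 < jap t := Real.sqrt_pos.2 (by positivity)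
lemma jap_sq (t : ℝ) : jap t ^ 2 = 1/2 + t^2 := Real.sq_sqrt (by positivity)
lemma abs_le_jap (t : ℝ) : |t| ≤ jap t := by
  rw [jap, show |t| = Real.sqrt (t^2) by rw [Real.sqrt_sq_eq_abs]]
  exact Real.sqrt_le_sqrt (by nlinarith)
lemma half_le_jap (t : ℝ) : (1/2 : ℝ) ≤ jap t := by
  nlinarith [jap_sq t, jap_pos t, sq_nonneg t, sq_nonneg (jap t - 1/2)]
lemma jap_shift {s t : ℝ} (h : |s - t| ≤ 2) : jap s ≤ 5 * jap t := by
  have h4 := abs_le.mp h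
  have h1 : (1/2 + s^2 : ℝ) ≤ (5 * jap t)^2 := by
    have h2 := jap_sq t
    have h3 := abs_le_jap t
    nlinarith [sq_nonneg (|t| - 2), sq_abs t, abs_nonneg t, sq_nonneg (s - t),
      mul_nonneg (sub_nonneg.2 (le_abs_self t)) (by linarith : (0:ℝ) ≤ 2 + (s - t)),
      mul_nonneg (by linarith [neg_abs_le t] : (0:ℝ) ≤ |t| + t) (by linarith : (0:ℝ) ≤ 2 - (s - t))]
  calc jap s = Real.sqrt (1/2 + s^2) := rfl
    _ ≤ Real.sqrt ((5 * jap t)^2) := Real.sqrt_le_sqrt h1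
    _ = 5 * jap t := Real.sqrt_sq (by nlinarith [jap_pos t])
lemma Lam_pos (n : ℤ × ℤ) : 0 < Lam n := add_pos (jap_pos _) (jap_pos _)

def wcmV : Fin 6 → ℤ × ℤ := ![(1,0),(-1,0),(0,1),(0,-1),(1,-1),(-1,1)]
def wcmA (n : ℤ × ℤ) : Fin 6 → ℂ :=
  ![(n.1:ℂ) + 1/2, -((n.1:ℂ) - 1/2), (n.2:ℂ) + 1/2, -((n.2:ℂ) - 1/2),
    (n.1:ℂ) - (n.2:ℂ) + 1, (n.2:ℂ) - (n.1:ℂ) + 1]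
def wcmW : Fin 6 → ℤ × ℤ → ℝ := fun j n =>
  ![jap (n.1:ℝ), jap (n.1:ℝ), jap (n.2:ℝ), jap (n.2:ℝ),
    jap ((n.1:ℝ) - (n.2:ℝ)), jap ((n.1:ℝ) - (n.2:ℝ))] j

@[simp] lemma wcmV0 : wcmV 0 = (1,0) := rfl
@[simp] lemma wcmV1 : wcmV 1 = (-1,0) := rfl
@[simp] lemma wcmV2 : wcmV 2 = (0,1) := rfl
@[simp] lemma wcmV3 : wcmV 3 = (0,-1) := rfl
@[simp] lemma wcmV4 : wcmV 4 = (1,-1) := rfl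
@[simp] lemma wcmV5 : wcmV 5 = (-1,1) := rfl
@[simp] lemma wcmA0 (n : ℤ × ℤ) : wcmA n 0 = (n.1:ℂ) + 1/2 := rfl
@[simp] lemma wcmA1 (n : ℤ × ℤ) : wcmA n 1 = -((n.1:ℂ) - 1/2) := rfl
@[simp] lemma wcmA2 (n : ℤ × ℤ) : wcmA n 2 = (n.2:ℂ) + 1/2 := rfl
@[simp] lemma wcmA3 (n : ℤ × ℤ) : wcmA n 3 = -((n.2:ℂ) - 1/2) := rfl
@[simp] lemma wcmA4 (n : ℤ × ℤ) : wcmA n 4 = (n.1:ℂ) - (n.2:ℂ) + 1 := rfl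
@[simp] lemma wcmA5 (n : ℤ × ℤ) : wcmA n 5 = (n.2:ℂ) - (n.1:ℂ) + 1 := rfl
@[simp] lemma wcmW0 (n : ℤ × ℤ) : wcmW 0 n = jap (n.1:ℝ) := rfl
@[simp] lemma wcmW1 (n : ℤ × ℤ) : wcmW 1 n = jap (n.1:ℝ) := rfl
@[simp] lemma wcmW2 (n : ℤ × ℤ) : wcmW 2 n = jap (n.2:ℝ) := rfl
@[simp] lemma wcmW3 (n : ℤ × ℤ) : wcmW 3 n = jap (n.2:ℝ) := rfl
@[simp] lemma wcmW4 (n : ℤ × ℤ) : wcmW 4 n = jap ((n.1:ℝ) - (n.2:ℝ)) := rfl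
@[simp] lemma wcmW5 (n : ℤ × ℤ) : wcmW 5 n = jap ((n.1:ℝ) - (n.2:ℝ)) := rfl

lemma pt_add (n : ℤ × ℤ) (a b : ℤ) : n + (a, b) = (n.1 + a, n.2 + b) := by cases n; rfl

lemma wcmV_abs (i : Fin 6) : |(wcmV i).1| ≤ 1 ∧ |(wcmV i).2| ≤ 1 := by
  fin_cases i <;> simp

lemma Lam_shift (n v : ℤ × ℤ) (h1 : |v.1| ≤ 2) (h2 : |v.2| ≤ 2) :
    Lam n ≤ 5 * Lam (n + v) := by
  have e1 : ((n + v).1 : ℝ) = (n.1 : ℝ) + (v.1 : ℝ) := by rw [Prod.fst_add]; push_cast; ring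
  have e2 : ((n + v).2 : ℝ) = (n.2 : ℝ) + (v.2 : ℝ) := by rw [Prod.snd_add]; push_cast; ring
  have j1 : jap (n.1 : ℝ) ≤ 5 * jap ((n+v).1 : ℝ) := by
    apply jap_shift
    have e : ((n.1:ℝ)) - ((n+v).1:ℝ) = -(v.1:ℝ) := by rw [e1]; ring
    rw [e, abs_neg]; exact_mod_cast h1
  have j2 : jap (n.2 : ℝ) ≤ 5 * jap ((n+v).2 : ℝ) := by
    apply jap_shift
    have e : ((n.2:ℝ)) - ((n+v).2:ℝ) = -(v.2:ℝ) := by rw [e2]; ring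
    rw [e, abs_neg]; exact_mod_cast h2
  simp only [Lam]; linarith

lemma inv_sqrt_diff {δ x y : ℝ} (hδ : 0 < δ) (hx : δ ≤ x) (hy : δ ≤ y) :
    |(Real.sqrt x)⁻¹ - (Real.sqrt y)⁻¹| ≤ (δ * Real.sqrt δ)⁻¹ * |x - y| := by
  set a := Real.sqrt x with ha
  set b := Real.sqrt y with hb
  have hδs : 0 < Real.sqrt δ := Real.sqrt_pos.2 hδ
  have hax : Real.sqrt δ ≤ a := Real.sqrt_le_sqrt hx
  have hby : Real.sqrt δ ≤ b := Real.sqrt_le_sqrt hy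
  have ha0 : 0 < a := lt_of_lt_of_le hδs hax
  have hb0 : 0 < b := lt_of_lt_of_le hδs hby
  have hax2 : a^2 = x := Real.sq_sqrt (le_trans hδ.le hx)
  have hby2 : b^2 = y := Real.sq_sqrt (le_trans hδ.le hy)
  have hD : (0:ℝ) < a * b * (a + b) := by positivity
  have key : a⁻¹ - b⁻¹ = (b^2 - a^2) / (a * b * (a + b)) := by field_simp; ring
  rw [key, hax2, hby2, abs_div, abs_of_pos hD, abs_sub_comm y x, div_eq_inv_mul]
  apply mul_le_mul_of_nonneg_right _ (abs_nonneg _)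
  apply inv_anti₀ (by positivity)
  have hab : δ ≤ a * b := by nlinarith [Real.mul_self_sqrt hδ.le]
  nlinarith [mul_le_mul_of_nonneg_right hab (by positivity : (0:ℝ) ≤ a + b),
    mul_le_mul_of_nonneg_left (by linarith : Real.sqrt δ ≤ a + b) hδ.le]

lemma wcmA_norm (n : ℤ × ℤ) (j : Fin 6) : ‖wcmA n j‖ ≤ 3 * wcmW j n := by
  have H : ∀ x : ℝ, ∀ c : ℝ, |c| ≤ 1 → |x + c| ≤ 3 * jap x := by
    intro x c hc
    have h1 := abs_le_jap x
    have h2 := half_le_jap x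
    calc |x + c| ≤ |x| + |c| := abs_add_le _ _
      _ ≤ jap x + 1 := by linarith
      _ ≤ 3 * jap x := by linarith
  have h0 : ‖wcmA n 0‖ ≤ 3 * wcmW 0 n := by
    have e : wcmA n 0 = (((n.1:ℝ) + 1/2 : ℝ) : ℂ) := by rw [wcmA0]; push_cast; ring
    rw [e, Complex.norm_real, Real.norm_eq_abs, wcmW0]
    exact H _ _ (by rw [abs_le]; constructor <;> norm_num)
  have h1 : ‖wcmA n 1‖ ≤ 3 * wcmW 1 n := by
    have e : wcmA n 1 = ((-((n.1:ℝ) - 1/2) : ℝ) : ℂ) := by rw [wcmA1]; push_cast; ring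
    rw [e, Complex.norm_real, Real.norm_eq_abs, wcmW1, abs_neg,
      show (n.1:ℝ) - 1/2 = (n.1:ℝ) + (-(1/2)) by ring]
    exact H _ _ (by rw [abs_le]; constructor <;> norm_num)
  have h2 : ‖wcmA n 2‖ ≤ 3 * wcmW 2 n := by
    have e : wcmA n 2 = (((n.2:ℝ) + 1/2 : ℝ) : ℂ) := by rw [wcmA2]; push_cast; ring
    rw [e, Complex.norm_real, Real.norm_eq_abs, wcmW2]
    exact H _ _ (by rw [abs_le]; constructor <;> norm_num)
  have h3 : ‖wcmA n 3‖ ≤ 3 * wcmW 3 n := by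
    have e : wcmA n 3 = ((-((n.2:ℝ) - 1/2) : ℝ) : ℂ) := by rw [wcmA3]; push_cast; ring
    rw [e, Complex.norm_real, Real.norm_eq_abs, wcmW3, abs_neg,
      show (n.2:ℝ) - 1/2 = (n.2:ℝ) + (-(1/2)) by ring]
    exact H _ _ (by rw [abs_le]; constructor <;> norm_num)
  have h4 : ‖wcmA n 4‖ ≤ 3 * wcmW 4 n := by
    have e : wcmA n 4 = ((((n.1:ℝ) - (n.2:ℝ)) + 1 : ℝ) : ℂ) := by rw [wcmA4]; push_cast; ring
    rw [e, Complex.norm_real, Real.norm_eq_abs, wcmW4]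
    exact H _ _ (by rw [abs_le]; constructor <;> norm_num)
  have h5 : ‖wcmA n 5‖ ≤ 3 * wcmW 5 n := by
    have e : wcmA n 5 = ((-(((n.1:ℝ) - (n.2:ℝ)) - 1) : ℝ) : ℂ) := by rw [wcmA5]; push_cast; ring
    rw [e, Complex.norm_real, Real.norm_eq_abs, wcmW5, abs_neg,
      show (n.1:ℝ) - (n.2:ℝ) - 1 = ((n.1:ℝ) - (n.2:ℝ)) + (-1) by ring]
    exact H _ _ (by rw [abs_le]; constructor <;> norm_num)
  fin_cases j
  exacts [h0, h1, h2, h3, h4, h5]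

lemma wcmA_diff (n v : ℤ × ℤ) (hv1 : |v.1| ≤ 1) (hv2 : |v.2| ≤ 1) (j : Fin 6) :
    ‖wcmA (n + v) j - wcmA n j‖ ≤ 2 := by
  have hv1' : |(v.1:ℝ)| ≤ 1 := by exact_mod_cast hv1
  have hv2' : |(v.2:ℝ)| ≤ 1 := by exact_mod_cast hv2
  have e1 : (((n+v).1 : ℤ) : ℂ) = ((n.1:ℝ) + (v.1:ℝ) : ℝ) := by
    rw [Prod.fst_add]; push_cast; ring
  have e2 : (((n+v).2 : ℤ) : ℂ) = ((n.2:ℝ) + (v.2:ℝ) : ℝ) := by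
    rw [Prod.snd_add]; push_cast; ring
  have habs : ∀ r : ℝ, |r| ≤ 2 → ‖((r:ℝ):ℂ)‖ ≤ 2 := by
    intro r hr; rw [Complex.norm_real, Real.norm_eq_abs]; exact hr
  have h0 : ‖wcmA (n+v) 0 - wcmA n 0‖ ≤ 2 := by
    have e : wcmA (n+v) 0 - wcmA n 0 = (((v.1:ℝ)):ℂ) := by
      rw [wcmA0, wcmA0, e1]; push_cast; ring
    rw [e]; exact habs _ (by linarith)
  have h1 : ‖wcmA (n+v) 1 - wcmA n 1‖ ≤ 2 := by
    have e : wcmA (n+v) 1 - wcmA n 1 = ((-(v.1:ℝ) : ℝ):ℂ) := by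
      rw [wcmA1, wcmA1, e1]; push_cast; ring
    rw [e]; exact habs _ (by rw [abs_neg]; linarith)
  have h2 : ‖wcmA (n+v) 2 - wcmA n 2‖ ≤ 2 := by
    have e : wcmA (n+v) 2 - wcmA n 2 = (((v.2:ℝ)):ℂ) := by
      rw [wcmA2, wcmA2, e2]; push_cast; ring
    rw [e]; exact habs _ (by linarith)
  have h3 : ‖wcmA (n+v) 3 - wcmA n 3‖ ≤ 2 := by
    have e : wcmA (n+v) 3 - wcmA n 3 = ((-(v.2:ℝ) : ℝ):ℂ) := by
      rw [wcmA3, wcmA3, e2]; push_cast; ring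
    rw [e]; exact habs _ (by rw [abs_neg]; linarith)
  have h4 : ‖wcmA (n+v) 4 - wcmA n 4‖ ≤ 2 := by
    have e : wcmA (n+v) 4 - wcmA n 4 = (((v.1:ℝ) - (v.2:ℝ) : ℝ):ℂ) := by
      rw [wcmA4, wcmA4, e1, e2]; push_cast; ring
    rw [e]
    refine habs _ ?_
    calc |(v.1:ℝ) - (v.2:ℝ)| ≤ |(v.1:ℝ)| + |(v.2:ℝ)| := abs_sub _ _
      _ ≤ 2 := by linarith
  have h5 : ‖wcmA (n+v) 5 - wcmA n 5‖ ≤ 2 := by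
    have e : wcmA (n+v) 5 - wcmA n 5 = (((v.2:ℝ) - (v.1:ℝ) : ℝ):ℂ) := by
      rw [wcmA5, wcmA5, e1, e2]; push_cast; ring
    rw [e]
    refine habs _ ?_
    calc |(v.2:ℝ) - (v.1:ℝ)| ≤ |(v.2:ℝ)| + |(v.1:ℝ)| := abs_sub _ _
      _ ≤ 2 := by linarith
  fin_cases j
  exacts [h0, h1, h2, h3, h4, h5]

lemma wcmW_shift (j : Fin 6) (n : ℤ × ℤ) (v : ℤ × ℤ) (hv1 : |v.1| ≤ 1) (hv2 : |v.2| ≤ 1) :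
    wcmW j n ≤ 5 * wcmW j (n + v) := by
  have hv1' : |(v.1:ℝ)| ≤ 1 := by exact_mod_cast hv1
  have hv2' : |(v.2:ℝ)| ≤ 1 := by exact_mod_cast hv2
  have e1 : (((n+v).1 : ℤ) : ℝ) = (n.1:ℝ) + (v.1:ℝ) := by rw [Prod.fst_add]; push_cast; ring
  have e2 : (((n+v).2 : ℤ) : ℝ) = (n.2:ℝ) + (v.2:ℝ) := by rw [Prod.snd_add]; push_cast; ring
  have hb1 := abs_le.mp hv1'
  have hb2 := abs_le.mp hv2'
  have k1 : jap (n.1:ℝ) ≤ 5 * jap (((n+v).1 : ℤ):ℝ) := by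
    apply jap_shift; rw [e1]
    rw [show (n.1:ℝ) - ((n.1:ℝ) + (v.1:ℝ)) = -(v.1:ℝ) by ring, abs_neg]; linarith
  have k2 : jap (n.2:ℝ) ≤ 5 * jap (((n+v).2 : ℤ):ℝ) := by
    apply jap_shift; rw [e2]
    rw [show (n.2:ℝ) - ((n.2:ℝ) + (v.2:ℝ)) = -(v.2:ℝ) by ring, abs_neg]; linarith
  have k3 : jap ((n.1:ℝ) - (n.2:ℝ)) ≤ 5 * jap ((((n+v).1 : ℤ):ℝ) - (((n+v).2 : ℤ):ℝ)) := by
    apply jap_shift; rw [e1, e2]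
    rw [show (n.1:ℝ) - (n.2:ℝ) - ((n.1:ℝ) + (v.1:ℝ) - ((n.2:ℝ) + (v.2:ℝ)))
        = (v.2:ℝ) - (v.1:ℝ) by ring]
    calc |(v.2:ℝ) - (v.1:ℝ)| ≤ |(v.2:ℝ)| + |(v.1:ℝ)| := abs_sub _ _
      _ ≤ 2 := by linarith
  fin_cases j
  exacts [k1, k1, k2, k2, k3, k3]


lemma wcmW_nonneg (j : Fin 6) (n : ℤ × ℤ) : 0 ≤ wcmW j n := by
  fin_cases j
  exacts [(jap_pos _).le, (jap_pos _).le, (jap_pos _).le, (jap_pos _).le,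
    (jap_pos _).le, (jap_pos _).le]

lemma jap_le_5 (x : ℝ) : jap x ≤ 5 * jap x := by nlinarith [jap_pos x]

def wcmS (η : ℤ × ℤ → ℝ) (k : ℤ × ℤ) : ℂ := ((Real.sqrt (1 + η k))⁻¹ : ℝ)

def wcmT (η : ℤ × ℤ → ℝ) (a b : ℤ × ℤ) : ℂ := 1 - wcmS η a * wcmS η b

def wcmD (η : ℤ × ℤ → ℝ) (f : ℤ × ℤ → ℂ) (n : ℤ × ℤ) : ℂ :=
  (1/6 : ℂ) * ∑ i : Fin 6, wcmT η n (n + wcmV i) * f (n + wcmV i)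

def wcmC (η : ℤ × ℤ → ℝ) (i j : Fin 6) (n : ℤ × ℤ) : ℂ :=
  wcmT η n (n + wcmV i) * wcmA (n + wcmV i) j
    - wcmA n j * wcmT η (n + wcmV j) (n + wcmV i + wcmV j)


lemma lapT_sum (f : ℤ × ℤ → ℂ) (n : ℤ × ℤ) :
    lapT f n = (1/6 : ℂ) * ∑ i : Fin 6, f (n + wcmV i) := by
  simp only [lapT, Fin.sum_univ_six, wcmV0, wcmV1, wcmV2, wcmV3, wcmV4, wcmV5,
    pt_add, add_zero, zero_add, sub_eq_add_neg]

lemma opA_sum (f : ℤ × ℤ → ℂ) (n : ℤ × ℤ) :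
    opA f n = (Complex.I/6 : ℂ) * ∑ i : Fin 6, wcmA n i * f (n + wcmV i) := by
  simp only [opA, Fin.sum_univ_six, wcmV0, wcmV1, wcmV2, wcmV3, wcmV4, wcmV5,
    wcmA0, wcmA1, wcmA2, wcmA3, wcmA4, wcmA5, pt_add, add_zero, zero_add, sub_eq_add_neg]
  ring

lemma lapPert_sum (η : ℤ × ℤ → ℝ) (f : ℤ × ℤ → ℂ) (n : ℤ × ℤ) :
    lapPert (fun k => 1 + η k) f n
      = (1/6 : ℂ) * ∑ i : Fin 6, (wcmS η n * wcmS η (n + wcmV i)) * f (n + wcmV i) := by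
  have hdiv : ∀ l : ℤ × ℤ, f l / ((Real.sqrt (1 + η n) * Real.sqrt (1 + η l) : ℝ) : ℂ)
      = (wcmS η n * wcmS η l) * f l := by
    intro l
    simp only [wcmS, div_eq_mul_inv, Complex.ofReal_mul, mul_inv, Complex.ofReal_inv]
    ring
  simp only [lapPert, Fin.sum_univ_six, wcmV0, wcmV1, wcmV2, wcmV3, wcmV4, wcmV5,
    pt_add, add_zero, zero_add, sub_eq_add_neg, hdiv]

lemma D_eq (η : ℤ × ℤ → ℝ) (f : ℤ × ℤ → ℂ) (n : ℤ × ℤ) :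
    lapT f n - lapPert (fun k => 1 + η k) f n = wcmD η f n := by
  rw [lapT_sum, lapPert_sum, wcmD, ← mul_sub, ← Finset.sum_sub_distrib]
  congr 1
  refine Finset.sum_congr rfl fun i _ => ?_
  rw [wcmT]; ring

lemma comm_eq (η : ℤ × ℤ → ℝ) (f : ℤ × ℤ → ℂ) (n : ℤ × ℤ) :
    (lapT (opA f) n - lapPert (fun k => 1 + η k) (opA f) n)
      - opA (fun k => lapT f k - lapPert (fun j => 1 + η j) f k) n
    = (Complex.I/36) * ∑ i : Fin 6, ∑ j : Fin 6, wcmC η i j n * f (n + wcmV i + wcmV j) := by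
  have hfun : (fun k => lapT f k - lapPert (fun j => 1 + η j) f k) = wcmD η f :=
    funext fun k => D_eq η f k
  rw [D_eq, hfun, wcmD, opA_sum]
  have h1 : (1/6 : ℂ) * ∑ i : Fin 6, wcmT η n (n + wcmV i) * opA f (n + wcmV i)
      = ∑ i : Fin 6, ∑ j : Fin 6,
          (Complex.I/36) * (wcmT η n (n + wcmV i) * wcmA (n + wcmV i) j * f (n + wcmV i + wcmV j)) := by
    simp only [Finset.mul_sum]
    refine Finset.sum_congr rfl fun i _ => ?_
    rw [opA_sum]
    simp only [Finset.mul_sum]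
    refine Finset.sum_congr rfl fun j _ => ?_
    ring
  have h2 : (Complex.I/6 : ℂ) * ∑ j : Fin 6, wcmA n j * wcmD η f (n + wcmV j)
      = ∑ j : Fin 6, ∑ i : Fin 6,
          (Complex.I/36) * (wcmA n j * wcmT η (n + wcmV j) (n + wcmV i + wcmV j) * f (n + wcmV i + wcmV j)) := by
    simp only [Finset.mul_sum]
    refine Finset.sum_congr rfl fun j _ => ?_
    rw [wcmD]
    simp only [Finset.mul_sum]
    refine Finset.sum_congr rfl fun i _ => ?_
    rw [show n + wcmV j + wcmV i = n + wcmV i + wcmV j from add_right_comm _ _ _]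
    ring
  rw [h1, h2,
    show (∑ j : Fin 6, ∑ i : Fin 6,
        (Complex.I/36) * (wcmA n j * wcmT η (n + wcmV j) (n + wcmV i + wcmV j) * f (n + wcmV i + wcmV j)))
      = ∑ i : Fin 6, ∑ j : Fin 6,
        (Complex.I/36) * (wcmA n j * wcmT η (n + wcmV j) (n + wcmV i + wcmV j) * f (n + wcmV i + wcmV j))
      from Finset.sum_comm,
    ← Finset.sum_sub_distrib, Finset.mul_sum]
  refine Finset.sum_congr rfl fun i _ => ?_
  rw [← Finset.sum_sub_distrib, Finset.mul_sum]
  refine Finset.sum_congr rfl fun j _ => ?_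
  rw [wcmC]; ring


set_option maxHeartbeats 1000000

/-- under `(H₀)-(H₄)`, `Λ^ε(Q)[Δ_T - Δ̃, A]` extends to a bounded operator. -/
theorem weighted_commutator_metric_bounded (ε : ℝ) (hε : 0 < ε) (η : ℤ × ℤ → ℝ)
    (h0inf : ∃ c : ℝ, -1 < c ∧ ∀ n : ℤ × ℤ, c ≤ η n)
    (h0lim : Filter.Tendsto η Filter.cofinite (nhds 0))
    (h1 : ∃ C : ℝ, ∀ n : ℤ × ℤ,
      Lam n ^ ε * jap (n.1 : ℝ) * |η n - η (n.1 + 1, n.2)| ≤ C)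
    (h2 : ∃ C : ℝ, ∀ n : ℤ × ℤ,
      Lam n ^ ε * jap (n.2 : ℝ) * |η n - η (n.1, n.2 + 1)| ≤ C)
    (h3 : ∃ C : ℝ, ∀ n : ℤ × ℤ,
      Lam n ^ ε * jap ((n.1 : ℝ) - (n.2 : ℝ)) * |η n - η (n.1 + 1, n.2 - 1)| ≤ C)
    (h4 : ∃ C : ℝ, ∀ n : ℤ × ℤ, Lam n ^ ε * |η n| ≤ C) :
    ∃ c > 0, ∀ f : ℤ × ℤ → ℂ, (Function.support f).Finite →
      ∑' n : ℤ × ℤ, Lam n ^ (2 * ε) *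
          ‖(lapT (opA f) n - lapPert (fun k => 1 + η k) (opA f) n)
            - opA (fun k => lapT f k - lapPert (fun j => 1 + η j) f k) n‖ ^ 2
        ≤ c * ∑' n : ℤ × ℤ, ‖f n‖ ^ 2 := by
  classical
  obtain ⟨c₀, hc₀, hη⟩ := h0inf
  obtain ⟨C1, hC1⟩ := h1
  obtain ⟨C2, hC2⟩ := h2
  obtain ⟨C3, hC3⟩ := h3
  obtain ⟨C4, hC4⟩ := h4
  have hC10 : 0 ≤ C1 := le_trans (mul_nonneg (mul_nonneg
    (Real.rpow_nonneg (Lam_pos ((0:ℤ),(0:ℤ))).le _) (jap_pos _).le) (abs_nonneg _)) (hC1 (0,0))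
  have hC20 : 0 ≤ C2 := le_trans (mul_nonneg (mul_nonneg
    (Real.rpow_nonneg (Lam_pos ((0:ℤ),(0:ℤ))).le _) (jap_pos _).le) (abs_nonneg _)) (hC2 (0,0))
  have hC30 : 0 ≤ C3 := le_trans (mul_nonneg (mul_nonneg
    (Real.rpow_nonneg (Lam_pos ((0:ℤ),(0:ℤ))).le _) (jap_pos _).le) (abs_nonneg _)) (hC3 (0,0))
  have hC40 : 0 ≤ C4 := le_trans (mul_nonneg
    (Real.rpow_nonneg (Lam_pos ((0:ℤ),(0:ℤ))).le _) (abs_nonneg _)) (hC4 (0,0))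
  set δ := min (1 + c₀) 1 with hδdef
  have hδpos : 0 < δ := lt_min (by linarith) one_pos
  have hδ1 : δ ≤ 1 := min_le_right _ _
  have hδm : ∀ k, δ ≤ 1 + η k := fun k => le_trans (min_le_left _ _) (by linarith [hη k])
  set Kd := (δ * Real.sqrt δ)⁻¹ with hKdef
  set Sb := (Real.sqrt δ)⁻¹ with hSdef
  have hKd0 : 0 ≤ Kd := inv_nonneg.2 (mul_nonneg hδpos.le (Real.sqrt_nonneg _))
  have hSb0 : 0 ≤ Sb := inv_nonneg.2 (Real.sqrt_nonneg _)
  have hS_le : ∀ k, ‖wcmS η k‖ ≤ Sb := by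
    intro k
    rw [wcmS, Complex.norm_real, Real.norm_eq_abs,
      abs_of_nonneg (inv_nonneg.2 (Real.sqrt_nonneg _))]
    exact inv_anti₀ (Real.sqrt_pos.2 hδpos) (Real.sqrt_le_sqrt (hδm k))
  have hS_diff : ∀ k l, ‖wcmS η k - wcmS η l‖ ≤ Kd * |η k - η l| := by
    intro k l
    rw [wcmS, wcmS, ← Complex.ofReal_sub, Complex.norm_real, Real.norm_eq_abs]
    have := inv_sqrt_diff hδpos (hδm k) (hδm l)
    rwa [show (1 + η k) - (1 + η l) = η k - η l by ring] at this
  have hS_one : ∀ k, ‖1 - wcmS η k‖ ≤ Kd * |η k| := by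
    intro k
    rw [wcmS, show (1:ℂ) - ((((Real.sqrt (1 + η k))⁻¹ : ℝ)):ℂ)
        = (((1 - (Real.sqrt (1 + η k))⁻¹ : ℝ)):ℂ) by push_cast; ring,
      Complex.norm_real, Real.norm_eq_abs]
    have := inv_sqrt_diff hδpos hδ1 (hδm k)
    rwa [Real.sqrt_one, inv_one, show (1:ℝ) - (1 + η k) = -(η k) by ring, abs_neg] at this
  set P5 := (5:ℝ) ^ ε with hP5def
  have hP51 : 1 ≤ P5 := by
    have : (5:ℝ) ^ (0:ℝ) ≤ (5:ℝ) ^ ε :=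
      Real.rpow_le_rpow_of_exponent_le (by norm_num) hε.le
    simpa using this
  have hP50 : 0 ≤ P5 := le_trans zero_le_one hP51
  have hwpos : ∀ n : ℤ × ℤ, 0 < Lam n ^ ε := fun n => Real.rpow_pos_of_pos (Lam_pos n) ε
  have hwshift : ∀ (n : ℤ × ℤ) (i : Fin 6), Lam n ^ ε ≤ P5 * Lam (n + wcmV i) ^ ε := by
    intro n i
    obtain ⟨hv1, hv2⟩ := wcmV_abs i
    have h5 : Lam n ≤ 5 * Lam (n + wcmV i) :=
      Lam_shift n _ (by linarith) (by linarith)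
    calc Lam n ^ ε ≤ (5 * Lam (n + wcmV i)) ^ ε :=
          Real.rpow_le_rpow (Lam_pos n).le h5 hε.le
      _ = P5 * Lam (n + wcmV i) ^ ε := by
          rw [Real.mul_rpow (by norm_num) (Lam_pos _).le]
  have hH4 : ∀ (p : ℤ × ℤ) (i : Fin 6), Lam p ^ ε * |η (p + wcmV i)| ≤ P5 * C4 := by
    intro p i
    calc Lam p ^ ε * |η (p + wcmV i)| ≤ (P5 * Lam (p + wcmV i) ^ ε) * |η (p + wcmV i)| :=
          mul_le_mul_of_nonneg_right (hwshift p i) (abs_nonneg _)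
      _ = P5 * (Lam (p + wcmV i) ^ ε * |η (p + wcmV i)|) := by ring
      _ ≤ P5 * C4 := mul_le_mul_of_nonneg_left (hC4 _) hP50
  have hH4' : ∀ p : ℤ × ℤ, Lam p ^ ε * |η p| ≤ P5 * C4 := fun p =>
    le_trans (hC4 p) (le_mul_of_one_le_left hC40 hP51)
  set CE := P5 * 5 * (C1 + C2 + C3) with hCEdef
  have hCE0 : 0 ≤ CE := mul_nonneg (mul_nonneg hP50 (by norm_num)) (by linarith)
  have hE : ∀ (p : ℤ × ℤ) (j : Fin 6),
      Lam p ^ ε * (wcmW j p * |η (p + wcmV j) - η p|) ≤ CE := by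
    intro p j
    have key : ∀ (q r : ℤ × ℤ) (Wp Wr C : ℝ), 0 ≤ Wp →
        Wp ≤ 5 * Wr → Lam p ^ ε ≤ P5 * Lam r ^ ε →
        Lam r ^ ε * Wr * |η p - η q| ≤ C → C ≤ C1 + C2 + C3 →
        Lam p ^ ε * (Wp * |η q - η p|) ≤ CE := by
      intro q r Wp Wr C hWp hW5 hLam hq hCle
      have h1 : Lam p ^ ε * (Wp * |η q - η p|)
          ≤ (P5 * Lam r ^ ε) * ((5 * Wr) * |η q - η p|) :=
        mul_le_mul hLam (mul_le_mul_of_nonneg_right hW5 (abs_nonneg _))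
          (mul_nonneg hWp (abs_nonneg _)) (mul_nonneg hP50 (hwpos r).le)
      have h2 : (P5 * Lam r ^ ε) * ((5 * Wr) * |η q - η p|)
          = (P5 * 5) * (Lam r ^ ε * Wr * |η p - η q|) := by
        rw [abs_sub_comm]; ring
      calc Lam p ^ ε * (Wp * |η q - η p|)
          ≤ (P5 * 5) * (Lam r ^ ε * Wr * |η p - η q|) := by rw [← h2]; exact h1
        _ ≤ (P5 * 5) * C :=
            mul_le_mul_of_nonneg_left hq (mul_nonneg hP50 (by norm_num))
        _ ≤ CE := mul_le_mul_of_nonneg_left hCle (mul_nonneg hP50 (by norm_num))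
    have e0 : p + wcmV 0 = (p.1 + 1, p.2) := by rw [wcmV0, pt_add, add_zero]
    have e1 : p + wcmV 1 = (p.1 + -1, p.2) := by rw [wcmV1, pt_add, add_zero]
    have e2 : p + wcmV 2 = (p.1, p.2 + 1) := by rw [wcmV2, pt_add, add_zero]
    have e3 : p + wcmV 3 = (p.1, p.2 + -1) := by rw [wcmV3, pt_add, add_zero]
    have e4 : p + wcmV 4 = (p.1 + 1, p.2 + -1) := by rw [wcmV4, pt_add]
    have e5 : p + wcmV 5 = (p.1 + -1, p.2 + 1) := by rw [wcmV5, pt_add]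
    have case0 : Lam p ^ ε * (wcmW 0 p * |η (p + wcmV 0) - η p|) ≤ CE := by
      refine key (p + wcmV 0) p (wcmW 0 p) (jap (p.1:ℝ)) C1 (wcmW_nonneg 0 p) ?_ ?_ ?_ (by linarith)
      · rw [wcmW0]; exact jap_le_5 _
      · exact le_mul_of_one_le_left (hwpos p).le hP51
      · rw [e0]; exact hC1 p
    have case1 : Lam p ^ ε * (wcmW 1 p * |η (p + wcmV 1) - η p|) ≤ CE := by
      refine key (p + wcmV 1) (p + wcmV 1) (wcmW 1 p) (jap (((p + wcmV 1).1 : ℤ) : ℝ)) C1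
        (wcmW_nonneg 1 p) ?_ (hwshift p 1) ?_ (by linarith)
      · rw [wcmW1]
        apply jap_shift
        rw [e1]
        rw [show (p.1:ℝ) - ((p.1 + -1 : ℤ):ℝ) = 1 by push_cast; ring]
        rw [abs_one]; norm_num
      · have h := hC1 (p + wcmV 1)
        rw [show (((p + wcmV 1).1 + 1 : ℤ), (p + wcmV 1).2) = p by
          rw [e1]; cases p with | mk x y => simp] at h
        rwa [abs_sub_comm] at h
    have case2 : Lam p ^ ε * (wcmW 2 p * |η (p + wcmV 2) - η p|) ≤ CE := by
      refine key (p + wcmV 2) p (wcmW 2 p) (jap (p.2:ℝ)) C2 (wcmW_nonneg 2 p) ?_ ?_ ?_ (by linarith)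
      · rw [wcmW2]; exact jap_le_5 _
      · exact le_mul_of_one_le_left (hwpos p).le hP51
      · rw [e2]; exact hC2 p
    have case3 : Lam p ^ ε * (wcmW 3 p * |η (p + wcmV 3) - η p|) ≤ CE := by
      refine key (p + wcmV 3) (p + wcmV 3) (wcmW 3 p) (jap (((p + wcmV 3).2 : ℤ) : ℝ)) C2
        (wcmW_nonneg 3 p) ?_ (hwshift p 3) ?_ (by linarith)
      · rw [wcmW3]
        apply jap_shift
        rw [e3]
        rw [show (p.2:ℝ) - ((p.2 + -1 : ℤ):ℝ) = 1 by push_cast; ring]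
        rw [abs_one]; norm_num
      · have h := hC2 (p + wcmV 3)
        rw [show ((p + wcmV 3).1, ((p + wcmV 3).2 + 1 : ℤ)) = p by
          rw [e3]; cases p with | mk x y => simp] at h
        rwa [abs_sub_comm] at h
    have case4 : Lam p ^ ε * (wcmW 4 p * |η (p + wcmV 4) - η p|) ≤ CE := by
      refine key (p + wcmV 4) p (wcmW 4 p) (jap ((p.1:ℝ) - (p.2:ℝ))) C3
        (wcmW_nonneg 4 p) ?_ ?_ ?_ (by linarith)
      · rw [wcmW4]; exact jap_le_5 _
      · exact le_mul_of_one_le_left (hwpos p).le hP51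
      · rw [show (p + wcmV 4) = ((p.1 + 1 : ℤ), (p.2 - 1 : ℤ)) by
          rw [e4]; cases p with | mk x y => simp [sub_eq_add_neg]]
        exact hC3 p
    have case5 : Lam p ^ ε * (wcmW 5 p * |η (p + wcmV 5) - η p|) ≤ CE := by
      refine key (p + wcmV 5) (p + wcmV 5) (wcmW 5 p)
        (jap ((((p + wcmV 5).1 : ℤ) : ℝ) - (((p + wcmV 5).2 : ℤ) : ℝ))) C3
        (wcmW_nonneg 5 p) ?_ (hwshift p 5) ?_ (by linarith)
      · rw [wcmW5]
        apply jap_shift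
        rw [e5]
        rw [show (p.1:ℝ) - (p.2:ℝ) - (((p.1 + -1 : ℤ):ℝ) - ((p.2 + 1 : ℤ):ℝ)) = 2 by
          push_cast; ring]
        rw [show |(2:ℝ)| = 2 from abs_of_pos (by norm_num)]
      · have h := hC3 (p + wcmV 5)
        rw [show (((p + wcmV 5).1 + 1 : ℤ), ((p + wcmV 5).2 - 1 : ℤ)) = p by
          rw [e5]; cases p with | mk x y => simp only [Prod.mk.injEq]; omega] at h
        rwa [abs_sub_comm] at h
    fin_cases j
    exacts [case0, case1, case2, case3, case4, case5]
  have hT : ∀ (n : ℤ × ℤ) (i : Fin 6),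
      Lam n ^ ε * ‖wcmT η n (n + wcmV i)‖ ≤ (Kd * Sb) * (P5 * C4) + Kd * (P5 * C4) := by
    intro n i
    have hid : wcmT η n (n + wcmV i)
        = (1 - wcmS η n) * wcmS η (n + wcmV i) + (1 - wcmS η (n + wcmV i)) := by
      rw [wcmT]; ring
    have e : ‖wcmT η n (n + wcmV i)‖ ≤ (Kd * |η n|) * Sb + Kd * |η (n + wcmV i)| := by
      rw [hid]
      calc ‖(1 - wcmS η n) * wcmS η (n + wcmV i) + (1 - wcmS η (n + wcmV i))‖
          ≤ ‖(1 - wcmS η n) * wcmS η (n + wcmV i)‖ + ‖1 - wcmS η (n + wcmV i)‖ :=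
            norm_add_le _ _
        _ = ‖1 - wcmS η n‖ * ‖wcmS η (n + wcmV i)‖ + ‖1 - wcmS η (n + wcmV i)‖ := by
            rw [norm_mul]
        _ ≤ (Kd * |η n|) * Sb + Kd * |η (n + wcmV i)| :=
            add_le_add (mul_le_mul (hS_one n) (hS_le _) (norm_nonneg _)
              (mul_nonneg hKd0 (abs_nonneg _))) (hS_one _)
    calc Lam n ^ ε * ‖wcmT η n (n + wcmV i)‖
        ≤ Lam n ^ ε * ((Kd * |η n|) * Sb + Kd * |η (n + wcmV i)|) :=
          mul_le_mul_of_nonneg_left e (hwpos n).le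
      _ = (Kd * Sb) * (Lam n ^ ε * |η n|) + Kd * (Lam n ^ ε * |η (n + wcmV i)|) := by ring
      _ ≤ (Kd * Sb) * (P5 * C4) + Kd * (P5 * C4) :=
          add_le_add (mul_le_mul_of_nonneg_left (hH4' n) (mul_nonneg hKd0 hSb0))
            (mul_le_mul_of_nonneg_left (hH4 n i) hKd0)
  set M := 2 * ((Kd * Sb) * (P5 * C4) + Kd * (P5 * C4)) + 3 * (Kd * Sb) * CE
      + 3 * (Sb * Kd) * (P5 * 5 * CE) with hMdef
  have hM0 : 0 ≤ M := by
    have a1 : 0 ≤ (Kd * Sb) * (P5 * C4) :=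
      mul_nonneg (mul_nonneg hKd0 hSb0) (mul_nonneg hP50 hC40)
    have a2 : 0 ≤ Kd * (P5 * C4) := mul_nonneg hKd0 (mul_nonneg hP50 hC40)
    have a3 : 0 ≤ 3 * (Kd * Sb) * CE :=
      mul_nonneg (mul_nonneg (by norm_num) (mul_nonneg hKd0 hSb0)) hCE0
    have a4 : 0 ≤ 3 * (Sb * Kd) * (P5 * 5 * CE) :=
      mul_nonneg (mul_nonneg (by norm_num) (mul_nonneg hSb0 hKd0))
        (mul_nonneg (mul_nonneg hP50 (by norm_num)) hCE0)
    linarith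
  have hcc : ∀ (n : ℤ × ℤ) (i j : Fin 6), Lam n ^ ε * ‖wcmC η i j n‖ ≤ M := by
    intro n i j
    obtain ⟨hvi1, hvi2⟩ := wcmV_abs i
    have hccEq : wcmC η i j n
        = (wcmA (n + wcmV i) j - wcmA n j) * wcmT η n (n + wcmV i)
          + wcmA n j * ((wcmS η (n + wcmV j) - wcmS η n) * wcmS η (n + wcmV i + wcmV j))
          + wcmA n j * (wcmS η n * (wcmS η (n + wcmV i + wcmV j) - wcmS η (n + wcmV i))) := by
      simp only [wcmC, wcmT]; ring
    have hnorm : ‖wcmC η i j n‖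
        ≤ ‖wcmA (n + wcmV i) j - wcmA n j‖ * ‖wcmT η n (n + wcmV i)‖
          + ‖wcmA n j‖ * (‖wcmS η (n + wcmV j) - wcmS η n‖ * ‖wcmS η (n + wcmV i + wcmV j)‖)
          + ‖wcmA n j‖ * (‖wcmS η n‖ * ‖wcmS η (n + wcmV i + wcmV j) - wcmS η (n + wcmV i)‖) := by
      rw [hccEq]
      refine le_trans (norm_add₃_le) (le_of_eq ?_)
      simp only [norm_mul]
    have hterm1 : Lam n ^ ε * (‖wcmA (n + wcmV i) j - wcmA n j‖ * ‖wcmT η n (n + wcmV i)‖)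
        ≤ 2 * ((Kd * Sb) * (P5 * C4) + Kd * (P5 * C4)) := by
      rw [show Lam n ^ ε * (‖wcmA (n + wcmV i) j - wcmA n j‖ * ‖wcmT η n (n + wcmV i)‖)
          = ‖wcmA (n + wcmV i) j - wcmA n j‖ * (Lam n ^ ε * ‖wcmT η n (n + wcmV i)‖) by ring]
      exact mul_le_mul (wcmA_diff n _ hvi1 hvi2 j) (hT n i)
        (mul_nonneg (hwpos n).le (norm_nonneg _)) (by norm_num)
    have hterm2 : Lam n ^ ε * (‖wcmA n j‖ *
          (‖wcmS η (n + wcmV j) - wcmS η n‖ * ‖wcmS η (n + wcmV i + wcmV j)‖))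
        ≤ 3 * (Kd * Sb) * CE := by
      have b1 : ‖wcmA n j‖ * (‖wcmS η (n + wcmV j) - wcmS η n‖ * ‖wcmS η (n + wcmV i + wcmV j)‖)
          ≤ (3 * wcmW j n) * ((Kd * |η (n + wcmV j) - η n|) * Sb) :=
        mul_le_mul (wcmA_norm n j)
          (mul_le_mul (hS_diff _ _) (hS_le _) (norm_nonneg _)
            (mul_nonneg hKd0 (abs_nonneg _)))
          (mul_nonneg (norm_nonneg _) (norm_nonneg _))
          (mul_nonneg (by norm_num) (wcmW_nonneg j n))
      calc Lam n ^ ε * (‖wcmA n j‖ *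
            (‖wcmS η (n + wcmV j) - wcmS η n‖ * ‖wcmS η (n + wcmV i + wcmV j)‖))
          ≤ Lam n ^ ε * ((3 * wcmW j n) * ((Kd * |η (n + wcmV j) - η n|) * Sb)) :=
            mul_le_mul_of_nonneg_left b1 (hwpos n).le
        _ = (3 * (Kd * Sb)) * (Lam n ^ ε * (wcmW j n * |η (n + wcmV j) - η n|)) := by ring
        _ ≤ (3 * (Kd * Sb)) * CE := mul_le_mul_of_nonneg_left (hE n j)
            (mul_nonneg (by norm_num) (mul_nonneg hKd0 hSb0))
        _ = 3 * (Kd * Sb) * CE := by ring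
    have hterm3 : Lam n ^ ε * (‖wcmA n j‖ *
          (‖wcmS η n‖ * ‖wcmS η (n + wcmV i + wcmV j) - wcmS η (n + wcmV i)‖))
        ≤ 3 * (Sb * Kd) * (P5 * 5 * CE) := by
      have b1 : ‖wcmA n j‖ * (‖wcmS η n‖ * ‖wcmS η (n + wcmV i + wcmV j) - wcmS η (n + wcmV i)‖)
          ≤ (3 * wcmW j n) * (Sb * (Kd * |η (n + wcmV i + wcmV j) - η (n + wcmV i)|)) :=
        mul_le_mul (wcmA_norm n j)
          (mul_le_mul (hS_le n) (hS_diff _ _) (norm_nonneg _) hSb0)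
          (mul_nonneg (norm_nonneg _) (norm_nonneg _))
          (mul_nonneg (by norm_num) (wcmW_nonneg j n))
      have hEE : Lam n ^ ε * (wcmW j n * |η (n + wcmV i + wcmV j) - η (n + wcmV i)|)
          ≤ P5 * 5 * CE := by
        have hcomp2 : wcmW j n ≤ 5 * wcmW j (n + wcmV i) := wcmW_shift j n (wcmV i) hvi1 hvi2
        calc Lam n ^ ε * (wcmW j n * |η (n + wcmV i + wcmV j) - η (n + wcmV i)|)
            ≤ (P5 * Lam (n + wcmV i) ^ ε) * ((5 * wcmW j (n + wcmV i)) *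
                |η (n + wcmV i + wcmV j) - η (n + wcmV i)|) :=
              mul_le_mul (hwshift n i) (mul_le_mul_of_nonneg_right hcomp2 (abs_nonneg _))
                (mul_nonneg (wcmW_nonneg j n) (abs_nonneg _))
                (mul_nonneg hP50 (hwpos _).le)
          _ = (P5 * 5) * (Lam (n + wcmV i) ^ ε * (wcmW j (n + wcmV i) *
                |η ((n + wcmV i) + wcmV j) - η (n + wcmV i)|)) := by ring
          _ ≤ (P5 * 5) * CE := mul_le_mul_of_nonneg_left (hE (n + wcmV i) j)
              (mul_nonneg hP50 (by norm_num))
          _ = P5 * 5 * CE := by ring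
      calc Lam n ^ ε * (‖wcmA n j‖ *
            (‖wcmS η n‖ * ‖wcmS η (n + wcmV i + wcmV j) - wcmS η (n + wcmV i)‖))
          ≤ Lam n ^ ε * ((3 * wcmW j n) *
              (Sb * (Kd * |η (n + wcmV i + wcmV j) - η (n + wcmV i)|))) :=
            mul_le_mul_of_nonneg_left b1 (hwpos n).le
        _ = (3 * (Sb * Kd)) * (Lam n ^ ε *
              (wcmW j n * |η (n + wcmV i + wcmV j) - η (n + wcmV i)|)) := by ring
        _ ≤ (3 * (Sb * Kd)) * (P5 * 5 * CE) := mul_le_mul_of_nonneg_left hEE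
            (mul_nonneg (by norm_num) (mul_nonneg hSb0 hKd0))
        _ = 3 * (Sb * Kd) * (P5 * 5 * CE) := by ring
    calc Lam n ^ ε * ‖wcmC η i j n‖
        ≤ Lam n ^ ε * (‖wcmA (n + wcmV i) j - wcmA n j‖ * ‖wcmT η n (n + wcmV i)‖
          + ‖wcmA n j‖ * (‖wcmS η (n + wcmV j) - wcmS η n‖ * ‖wcmS η (n + wcmV i + wcmV j)‖)
          + ‖wcmA n j‖ * (‖wcmS η n‖ * ‖wcmS η (n + wcmV i + wcmV j) - wcmS η (n + wcmV i)‖)) :=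
          mul_le_mul_of_nonneg_left hnorm (hwpos n).le
      _ = Lam n ^ ε * (‖wcmA (n + wcmV i) j - wcmA n j‖ * ‖wcmT η n (n + wcmV i)‖)
          + Lam n ^ ε * (‖wcmA n j‖ *
              (‖wcmS η (n + wcmV j) - wcmS η n‖ * ‖wcmS η (n + wcmV i + wcmV j)‖))
          + Lam n ^ ε * (‖wcmA n j‖ *
              (‖wcmS η n‖ * ‖wcmS η (n + wcmV i + wcmV j) - wcmS η (n + wcmV i)‖)) := by ring
      _ ≤ M := by rw [hMdef]; linarith
  refine ⟨M^2 + 1, by positivity, ?_⟩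
  intro f hfin
  have hb : Summable (fun n : ℤ × ℤ => ‖f n‖^2) := by
    apply summable_of_ne_finset_zero (s := hfin.toFinset)
    intro n hn
    have hfz : f n = 0 := of_not_not fun h => hn (hfin.mem_toFinset.2 h)
    rw [hfz]; simp
  have hbu2 : ∀ i j : Fin 6, Summable (fun n : ℤ × ℤ => ‖f (n + wcmV i + wcmV j)‖^2) := by
    intro i j
    have e : (fun n : ℤ × ℤ => ‖f (n + wcmV i + wcmV j)‖^2)
        = fun n : ℤ × ℤ => ‖f (n + (wcmV i + wcmV j))‖^2 := by
      funext n; rw [add_assoc]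
    rw [e]
    have h := hb.comp_injective (Equiv.addRight (wcmV i + wcmV j)).injective
    simpa [Function.comp_def, Equiv.coe_addRight, add_assoc] using h
  have hGsum : Summable (fun n : ℤ × ℤ =>
      (M^2/36) * ∑ i : Fin 6, ∑ j : Fin 6, ‖f (n + wcmV i + wcmV j)‖^2) := by
    apply Summable.mul_left
    exact summable_sum fun i _ => summable_sum fun j _ => hbu2 i j
  have hpt : ∀ n : ℤ × ℤ, Lam n ^ (2 * ε) *
      ‖(lapT (opA f) n - lapPert (fun k => 1 + η k) (opA f) n)
        - opA (fun k => lapT f k - lapPert (fun j => 1 + η j) f k) n‖ ^ 2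
      ≤ (M^2/36) * ∑ i : Fin 6, ∑ j : Fin 6, ‖f (n + wcmV i + wcmV j)‖^2 := by
    intro n
    have h1 : ‖(lapT (opA f) n - lapPert (fun k => 1 + η k) (opA f) n)
        - opA (fun k => lapT f k - lapPert (fun j => 1 + η j) f k) n‖
        ≤ (1/36) * ∑ i : Fin 6, ∑ j : Fin 6, ‖wcmC η i j n‖ * ‖f (n + wcmV i + wcmV j)‖ := by
      rw [comm_eq η f n, norm_mul,
        show ‖(Complex.I/36 : ℂ)‖ = 1/36 by
          rw [norm_div, Complex.norm_I, show ((36:ℂ)) = (((36:ℝ)):ℂ) by norm_num,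
            Complex.norm_real, Real.norm_eq_abs]; norm_num]
      apply mul_le_mul_of_nonneg_left _ (by norm_num : (0:ℝ) ≤ 1/36)
      calc ‖∑ i : Fin 6, ∑ j : Fin 6, wcmC η i j n * f (n + wcmV i + wcmV j)‖
          ≤ ∑ i : Fin 6, ‖∑ j : Fin 6, wcmC η i j n * f (n + wcmV i + wcmV j)‖ :=
            norm_sum_le _ _
        _ ≤ ∑ i : Fin 6, ∑ j : Fin 6, ‖wcmC η i j n * f (n + wcmV i + wcmV j)‖ :=
            Finset.sum_le_sum fun i _ => norm_sum_le _ _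
        _ = ∑ i : Fin 6, ∑ j : Fin 6, ‖wcmC η i j n‖ * ‖f (n + wcmV i + wcmV j)‖ := by
            simp only [norm_mul]
    have h2 : Lam n ^ ε * ‖(lapT (opA f) n - lapPert (fun k => 1 + η k) (opA f) n)
        - opA (fun k => lapT f k - lapPert (fun j => 1 + η j) f k) n‖
        ≤ (M/36) * ∑ i : Fin 6, ∑ j : Fin 6, ‖f (n + wcmV i + wcmV j)‖ := by
      calc Lam n ^ ε * ‖(lapT (opA f) n - lapPert (fun k => 1 + η k) (opA f) n)
            - opA (fun k => lapT f k - lapPert (fun j => 1 + η j) f k) n‖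
          ≤ Lam n ^ ε * ((1/36) * ∑ i : Fin 6, ∑ j : Fin 6,
              ‖wcmC η i j n‖ * ‖f (n + wcmV i + wcmV j)‖) :=
            mul_le_mul_of_nonneg_left h1 (hwpos n).le
        _ = (1/36) * ∑ i : Fin 6, ∑ j : Fin 6,
              (Lam n ^ ε * ‖wcmC η i j n‖) * ‖f (n + wcmV i + wcmV j)‖ := by
            simp only [Finset.mul_sum]
            refine Finset.sum_congr rfl fun i _ => Finset.sum_congr rfl fun j _ => by ring
        _ ≤ (1/36) * ∑ i : Fin 6, ∑ j : Fin 6, M * ‖f (n + wcmV i + wcmV j)‖ := by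
            apply mul_le_mul_of_nonneg_left _ (by norm_num : (0:ℝ) ≤ 1/36)
            refine Finset.sum_le_sum fun i _ => Finset.sum_le_sum fun j _ =>
              mul_le_mul_of_nonneg_right (hcc n i j) (norm_nonneg _)
        _ = (M/36) * ∑ i : Fin 6, ∑ j : Fin 6, ‖f (n + wcmV i + wcmV j)‖ := by
            simp only [Finset.mul_sum]
            refine Finset.sum_congr rfl fun i _ => Finset.sum_congr rfl fun j _ => by ring
    have hsq : (∑ i : Fin 6, ∑ j : Fin 6, ‖f (n + wcmV i + wcmV j)‖)^2
        ≤ 36 * ∑ i : Fin 6, ∑ j : Fin 6, ‖f (n + wcmV i + wcmV j)‖^2 := by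
      have o1 : (∑ i : Fin 6, ∑ j : Fin 6, ‖f (n + wcmV i + wcmV j)‖)^2
          ≤ 6 * ∑ i : Fin 6, (∑ j : Fin 6, ‖f (n + wcmV i + wcmV j)‖)^2 := by
        have := sq_sum_le_card_mul_sum_sq (s := (Finset.univ : Finset (Fin 6)))
          (f := fun i => ∑ j : Fin 6, ‖f (n + wcmV i + wcmV j)‖)
        simpa using this
      have o2 : ∀ i : Fin 6, (∑ j : Fin 6, ‖f (n + wcmV i + wcmV j)‖)^2
          ≤ 6 * ∑ j : Fin 6, ‖f (n + wcmV i + wcmV j)‖^2 := by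
        intro i
        have := sq_sum_le_card_mul_sum_sq (s := (Finset.univ : Finset (Fin 6)))
          (f := fun j => ‖f (n + wcmV i + wcmV j)‖)
        simpa using this
      calc (∑ i : Fin 6, ∑ j : Fin 6, ‖f (n + wcmV i + wcmV j)‖)^2
          ≤ 6 * ∑ i : Fin 6, (∑ j : Fin 6, ‖f (n + wcmV i + wcmV j)‖)^2 := o1
        _ ≤ 6 * ∑ i : Fin 6, (6 * ∑ j : Fin 6, ‖f (n + wcmV i + wcmV j)‖^2) :=
            mul_le_mul_of_nonneg_left (Finset.sum_le_sum fun i _ => o2 i) (by norm_num)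
        _ = 36 * ∑ i : Fin 6, ∑ j : Fin 6, ‖f (n + wcmV i + wcmV j)‖^2 := by
            rw [Finset.mul_sum, Finset.mul_sum]
            exact Finset.sum_congr rfl fun i _ => by ring
    have hw2 : Lam n ^ (2 * ε) = (Lam n ^ ε)^2 := by
      rw [show (2:ℝ) * ε = ε * 2 by ring, Real.rpow_mul (Lam_pos n).le, Real.rpow_two]
    calc Lam n ^ (2 * ε) * ‖(lapT (opA f) n - lapPert (fun k => 1 + η k) (opA f) n)
          - opA (fun k => lapT f k - lapPert (fun j => 1 + η j) f k) n‖ ^ 2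
        = (Lam n ^ ε * ‖(lapT (opA f) n - lapPert (fun k => 1 + η k) (opA f) n)
            - opA (fun k => lapT f k - lapPert (fun j => 1 + η j) f k) n‖)^2 := by
          rw [hw2]; ring
      _ ≤ ((M/36) * ∑ i : Fin 6, ∑ j : Fin 6, ‖f (n + wcmV i + wcmV j)‖)^2 :=
          pow_le_pow_left₀ (mul_nonneg (hwpos n).le (norm_nonneg _)) h2 2
      _ = (M/36)^2 * (∑ i : Fin 6, ∑ j : Fin 6, ‖f (n + wcmV i + wcmV j)‖)^2 := by ring
      _ ≤ (M/36)^2 * (36 * ∑ i : Fin 6, ∑ j : Fin 6, ‖f (n + wcmV i + wcmV j)‖^2) :=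
          mul_le_mul_of_nonneg_left hsq (by positivity)
      _ = (M^2/36) * ∑ i : Fin 6, ∑ j : Fin 6, ‖f (n + wcmV i + wcmV j)‖^2 := by ring
  have hLsum : Summable (fun n : ℤ × ℤ => Lam n ^ (2 * ε) *
      ‖(lapT (opA f) n - lapPert (fun k => 1 + η k) (opA f) n)
        - opA (fun k => lapT f k - lapPert (fun j => 1 + η j) f k) n‖ ^ 2) :=
    Summable.of_nonneg_of_le
      (fun n => mul_nonneg (Real.rpow_nonneg (Lam_pos n).le _) (by positivity)) hpt hGsum
  calc ∑' n : ℤ × ℤ, Lam n ^ (2 * ε) *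
        ‖(lapT (opA f) n - lapPert (fun k => 1 + η k) (opA f) n)
          - opA (fun k => lapT f k - lapPert (fun j => 1 + η j) f k) n‖ ^ 2
      ≤ ∑' n : ℤ × ℤ, (M^2/36) * ∑ i : Fin 6, ∑ j : Fin 6, ‖f (n + wcmV i + wcmV j)‖^2 :=
        Summable.tsum_le_tsum hpt hLsum hGsum
    _ = (M^2/36) * ∑ i : Fin 6, ∑ j : Fin 6, ∑' n : ℤ × ℤ, ‖f (n + wcmV i + wcmV j)‖^2 := by
        rw [tsum_mul_left]
        congr 1
        rw [Summable.tsum_finsetSum fun i _ => summable_sum fun j _ => hbu2 i j]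
        exact Finset.sum_congr rfl fun i _ => Summable.tsum_finsetSum fun j _ => hbu2 i j
    _ = (M^2/36) * ∑ _i : Fin 6, ∑ _j : Fin 6, ∑' n : ℤ × ℤ, ‖f n‖^2 := by
        congr 1
        refine Finset.sum_congr rfl fun i _ => Finset.sum_congr rfl fun j _ => ?_
        have e : (fun n : ℤ × ℤ => ‖f (n + wcmV i + wcmV j)‖^2)
            = fun n : ℤ × ℤ => ‖f (n + (wcmV i + wcmV j))‖^2 := by
          funext n; rw [add_assoc]
        rw [e]
        exact (Equiv.addRight (wcmV i + wcmV j)).tsum_eq (fun n : ℤ × ℤ => ‖f n‖^2)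
    _ = M^2 * ∑' n : ℤ × ℤ, ‖f n‖^2 := by
        simp only [Finset.sum_const, Finset.card_univ, Fintype.card_fin, smul_eq_mul]
        ring
    _ ≤ (M^2 + 1) * ∑' n : ℤ × ℤ, ‖f n‖^2 :=
        mul_le_mul_of_nonneg_right (by linarith [sq_nonneg M])
          (tsum_nonneg fun n => by positivity)
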